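/- Let H be a complex Hilbert space. Let D : H → H be a bounded self-adjoint invertible operator, ψ ∈ H a unit vector with D ψ = λ_D • ψ for some real λ_D < 0, and ω > 0 such that Re ⟪D v, v⟫ ≥ ω ‖v‖² for every v orthogonal to ψ. Let 0 < β₋ ≤ β₊, let f : ℝ → ℝ be continuous with β₋ ≤ f(t) ≤ β₊ for all t ∈ ℝ, and let λ > −β₋ be real. Let φ ∈ H satisfy that ⟪φ, ψ⟫ is a positive real number γ, set φ⊥ := φ − γ • ψ and C₀ := ((β₊ + λ)/((β₋ + λ) γ))² · Re ⟪D⁻¹ φ⊥, φ⊥⟫, and assume |λ_D| · C₀ ≤ 1. Then every u ∈ H satisfying the constraint ⟪u, D⁻¹((cfc f D) + λ I) φ⟫ = 0 obeys, with u⊥ := u − ⟪u, ψ⟫ • ψ, the lower bound Re ⟪D⁻¹ u, u⟫ ≥ (1 − |λ_D| C₀) · Re ⟪D⁻¹ u⊥, u⊥⟫ ≥ 0. -/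

import Mathlib

open scoped InnerProductSpace

section aux

variable {H : Type*} [NormedAddCommGroup H] [InnerProductSpace ℂ H] [CompleteSpace H]

private lemma eig_mem_spectrum {D : H →L[ℂ] H} {ψ : H} {lamD : ℝ}
    (hψ : ψ ≠ 0) (hDψ : D ψ = ((lamD : ℝ) : ℂ) • ψ) : lamD ∈ spectrum ℝ D := by
  rw [spectrum.mem_iff]
  intro h
  obtain ⟨u, hu⟩ := h
  have h0 : (algebraMap ℝ (H →L[ℂ] H) lamD - D) ψ = 0 := by
    rw [Algebra.algebraMap_eq_smul_one]
    simp [ContinuousLinearMap.sub_apply, hDψ, Complex.coe_smul]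
  apply hψ
  have h1 := congrArg (fun T : H →L[ℂ] H => T ψ) u.inv_mul
  simpa [hu, ContinuousLinearMap.mul_apply, h0] using h1.symm

private lemma cfc_eigvec {D : H →L[ℂ] H} (hD : IsSelfAdjoint D) {ψ : H} {lamD : ℝ}
    (hψ : ψ ≠ 0) (hDψ : D ψ = ((lamD : ℝ) : ℂ) • ψ) (g : ℝ → ℝ) (hg : Continuous g) :
    cfc g D ψ = ((g lamD : ℝ) : ℂ) • ψ := by
  have hmem : lamD ∈ spectrum ℝ D := eig_mem_spectrum hψ hDψ
  have key : ∀ h : C(spectrum ℝ D, ℝ),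
      cfcHom hD (R := ℝ) h ψ = ((h ⟨lamD, hmem⟩ : ℝ) : ℂ) • ψ := by
    intro h
    refine ContinuousMap.induction_on_of_compact ?_ ?_ ?_ ?_ ?_ ?_ h
    · intro r
      have h1 : (ContinuousMap.const (spectrum ℝ D) r) = algebraMap ℝ C(spectrum ℝ D, ℝ) r := by
        ext y; simp [Algebra.algebraMap_eq_smul_one]
      rw [h1, AlgHomClass.commutes, Algebra.algebraMap_eq_smul_one]
      simp [Complex.coe_smul]
    · rw [cfcHom_id hD]
      simpa using hDψ
    · rw [star_trivial, cfcHom_id hD]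
      simpa using hDψ
    · intro f₁ f₂ h1 h2
      rw [map_add, ContinuousLinearMap.add_apply, h1, h2]
      simp only [Pi.add_apply, ContinuousMap.add_apply, Complex.ofReal_add, add_smul]
    · intro f₁ f₂ h1 h2
      rw [map_mul, ContinuousLinearMap.mul_apply, h2, map_smul, h1, smul_smul]
      congr 1
      simp only [Pi.mul_apply, ContinuousMap.mul_apply, Complex.ofReal_mul]
      ring
    · intro f₁ hfreq
      have hclosed : IsClosed {h : C(spectrum ℝ D, ℝ) |
          cfcHom hD (R := ℝ) h ψ = ((h ⟨lamD, hmem⟩ : ℝ) : ℂ) • ψ} := by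
        apply isClosed_eq
        · exact (ContinuousLinearMap.apply ℂ H ψ).continuous.comp (cfcHom_continuous hD)
        · exact (Complex.continuous_ofReal.comp
            (continuous_eval_const _)).smul continuous_const
      exact hclosed.closure_subset (mem_closure_iff_frequently.mpr hfreq)
  rw [cfc_apply g D hD hg.continuousOn]
  exact key _

end aux

set_option maxHeartbeats 1000000 in
/-- Quantitative form of Lemma 2.5 (n(Dinv)): with `D` bounded self-adjoint invertible,
negative ground state `D ψ = lamD • ψ` (`‖ψ‖ = 1`, `lamD < 0`), spectral gap
`Re ⟪D v, v⟫ ≥ ω ‖v‖²` on `{ψ}⊥` (`ω > 0`), a continuous `f : ℝ → ℝ` with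
`βlo ≤ f ≤ βhi` (`0 < βlo ≤ βhi`), a real `lam > -βlo`, `φ` with `⟪φ, ψ⟫ = γ > 0`
(paper convention: inner product linear in its first argument), `φ⊥ := φ - γ • ψ`,
`C₀ := ((βhi + lam)/((βlo + lam) γ))² · Re ⟪D⁻¹ φ⊥, φ⊥⟫`, and `|lamD| · C₀ ≤ 1`,
every `u` with `⟪u, D⁻¹((cfc f D) + lam I) φ⟫ = 0` obeys, with `u⊥ := u - ⟪u, ψ⟫ • ψ`,
`Re ⟪D⁻¹ u, u⟫ ≥ (1 - |lamD| C₀) · Re ⟪D⁻¹ u⊥, u⊥⟫ ≥ 0`. -/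
theorem constrained_Dinv_nonneg
    {H : Type*} [NormedAddCommGroup H] [InnerProductSpace ℂ H] [CompleteSpace H]
    (D Dinv : H →L[ℂ] H) (hD : IsSelfAdjoint D)
    (hD1 : D.comp Dinv = ContinuousLinearMap.id ℂ H)
    (hD2 : Dinv.comp D = ContinuousLinearMap.id ℂ H)
    (ψ : H) (hψ : ‖ψ‖ = 1) (lamD : ℝ) (hlamD : lamD < 0) (hDψ : D ψ = lamD • ψ)
    (ω : ℝ) (hω : 0 < ω)
    (hgap : ∀ v : H, ⟪ψ, v⟫_ℂ = 0 → ω * ‖v‖ ^ 2 ≤ (⟪v, D v⟫_ℂ).re)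
    (βlo βhi : ℝ) (hβlo : 0 < βlo) (hββ : βlo ≤ βhi)
    (f : ℝ → ℝ) (hf : Continuous f) (hfb : ∀ t : ℝ, βlo ≤ f t ∧ f t ≤ βhi)
    (lam : ℝ) (hlam : -βlo < lam)
    (φ : H) (γ : ℝ) (hγ : 0 < γ) (hφψ : ⟪ψ, φ⟫_ℂ = (γ : ℂ))
    (C₀ : ℝ)
    (hC₀ : C₀ = ((βhi + lam) / ((βlo + lam) * γ)) ^ 2 *
      (⟪φ - (γ : ℂ) • ψ, Dinv (φ - (γ : ℂ) • ψ)⟫_ℂ).re)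
    (hsmall : |lamD| * C₀ ≤ 1)
    (u : H)
    (hconstraint : ⟪Dinv ((cfc f D) φ + (lam : ℂ) • φ), u⟫_ℂ = 0) :
    (1 - |lamD| * C₀) *
        (⟪u - ⟪ψ, u⟫_ℂ • ψ, Dinv (u - ⟪ψ, u⟫_ℂ • ψ)⟫_ℂ).re ≤ (⟪u, Dinv u⟫_ℂ).re ∧
      0 ≤ (1 - |lamD| * C₀) *
        (⟪u - ⟪ψ, u⟫_ℂ • ψ, Dinv (u - ⟪ψ, u⟫_ℂ • ψ)⟫_ℂ).re := by
  have hD1' : D * Dinv = 1 := hD1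
  have hD2' : Dinv * D = 1 := hD2
  have hψ0 : ψ ≠ 0 := by intro h; rw [h, norm_zero] at hψ; norm_num at hψ
  have hψψ : ⟪ψ, ψ⟫_ℂ = 1 := by
    rw [inner_self_eq_norm_sq_to_K (𝕜 := ℂ), hψ]; norm_num
  have hDψ' : D ψ = ((lamD : ℝ) : ℂ) • ψ := by rw [hDψ, Complex.coe_smul]
  have hlamD0 : lamD ≠ 0 := ne_of_lt hlamD
  have hlamDC0 : (lamD : ℂ) ≠ 0 := Complex.ofReal_ne_zero.mpr hlamD0
  -- pointwise inverse identities
  have hDDinv : ∀ x, D (Dinv x) = x := by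
    intro x
    have := ContinuousLinearMap.ext_iff.mp hD1 x
    simpa using this
  have hDinvD : ∀ x, Dinv (D x) = x := by
    intro x
    have := ContinuousLinearMap.ext_iff.mp hD2 x
    simpa using this
  -- Dinv is self-adjoint
  have hDinvsa : IsSelfAdjoint Dinv := by
    have h3 : D * star Dinv = 1 := by
      have := congrArg star hD2'
      rwa [star_mul, star_one, hD.star_eq] at this
    calc star Dinv = (Dinv * D) * star Dinv := by rw [hD2', one_mul]
    _ = Dinv * (D * star Dinv) := by rw [mul_assoc]
    _ = Dinv := by rw [h3, mul_one]
  have symD : (D : H →ₗ[ℂ] H).IsSymmetric := hD.isSymmetric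
  have symDinv : (Dinv : H →ₗ[ℂ] H).IsSymmetric := hDinvsa.isSymmetric
  -- orthogonality preservation
  have hperp : ∀ T : H →L[ℂ] H, (T : H →ₗ[ℂ] H).IsSymmetric → ∀ c : ℝ,
      T ψ = ((c : ℝ) : ℂ) • ψ → ∀ v, ⟪ψ, v⟫_ℂ = 0 → ⟪ψ, T v⟫_ℂ = 0 := by
    intro T hT c hc v hv
    rw [← hT.apply_clm ψ v, hc, inner_smul_left, Complex.conj_ofReal, hv, mul_zero]
  have hDinvψ : Dinv ψ = ((lamD⁻¹ : ℝ) : ℂ) • ψ := by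
    have h1 : Dinv (D ψ) = ψ := hDinvD ψ
    rw [hDψ', map_smul] at h1
    have h2 : Dinv ψ = ((lamD : ℝ) : ℂ)⁻¹ • (((lamD : ℝ) : ℂ) • Dinv ψ) := by
      rw [inv_smul_smul₀ hlamDC0]
    rw [h2, h1, Complex.ofReal_inv]
  have hDinvperp : ∀ v, ⟪ψ, v⟫_ℂ = 0 → ⟪ψ, Dinv v⟫_ℂ = 0 :=
    hperp Dinv symDinv lamD⁻¹ hDinvψ
  -- positivity of Dinv on the orthogonal complement of ψ
  have hpos : ∀ v, ⟪ψ, v⟫_ℂ = 0 → 0 ≤ (⟪v, Dinv v⟫_ℂ).re := by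
    intro v hv
    have h1 := hgap (Dinv v) (hDinvperp v hv)
    rw [hDDinv v] at h1
    have h2 : (⟪Dinv v, v⟫_ℂ).re = (⟪v, Dinv v⟫_ℂ).re := by
      rw [← inner_conj_symm v (Dinv v), Complex.conj_re]
    have h3 : (0:ℝ) ≤ ω * ‖Dinv v‖ ^ 2 := by positivity
    linarith
  -- Cauchy-Schwarz for the (semi-definite) form B(x, y) = ⟪Px, Dinv (Py)⟫
  have hPperp : ∀ x : H, ⟪ψ, x - ⟪ψ, x⟫_ℂ • ψ⟫_ℂ = 0 := by
    intro x; simp [inner_sub_right, inner_smul_right, hψψ, hψ]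
  let core : PreInnerProductSpace.Core ℂ H :=
  { inner := fun x y => ⟪x - ⟪ψ, x⟫_ℂ • ψ, Dinv (y - ⟪ψ, y⟫_ℂ • ψ)⟫_ℂ
    conj_inner_symm := by
      intro x y
      show (starRingEnd ℂ) ⟪y - ⟪ψ, y⟫_ℂ • ψ, Dinv (x - ⟪ψ, x⟫_ℂ • ψ)⟫_ℂ
        = ⟪x - ⟪ψ, x⟫_ℂ • ψ, Dinv (y - ⟪ψ, y⟫_ℂ • ψ)⟫_ℂ
      rw [inner_conj_symm]
      exact symDinv.apply_clm _ _
    re_inner_nonneg := fun x => hpos _ (hPperp x)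
    add_left := by
      intro x y z
      show ⟪(x + y) - ⟪ψ, x + y⟫_ℂ • ψ, Dinv (z - ⟪ψ, z⟫_ℂ • ψ)⟫_ℂ
          = ⟪x - ⟪ψ, x⟫_ℂ • ψ, Dinv (z - ⟪ψ, z⟫_ℂ • ψ)⟫_ℂ
            + ⟪y - ⟪ψ, y⟫_ℂ • ψ, Dinv (z - ⟪ψ, z⟫_ℂ • ψ)⟫_ℂ
      have h9 : (x + y) - ⟪ψ, x + y⟫_ℂ • ψ = (x - ⟪ψ, x⟫_ℂ • ψ) + (y - ⟪ψ, y⟫_ℂ • ψ) := by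
        rw [inner_add_right, add_smul]; abel
      rw [h9, inner_add_left]
    smul_left := by
      intro x y r
      show ⟪r • x - ⟪ψ, r • x⟫_ℂ • ψ, Dinv (y - ⟪ψ, y⟫_ℂ • ψ)⟫_ℂ
          = (starRingEnd ℂ) r * ⟪x - ⟪ψ, x⟫_ℂ • ψ, Dinv (y - ⟪ψ, y⟫_ℂ • ψ)⟫_ℂ
      have h9 : r • x - ⟪ψ, r • x⟫_ℂ • ψ = r • (x - ⟪ψ, x⟫_ℂ • ψ) := by
        rw [inner_smul_right, smul_sub, smul_smul]
      rw [h9, inner_smul_left] }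
  have hCS : ∀ x y : H, ⟪ψ, x⟫_ℂ = 0 → ⟪ψ, y⟫_ℂ = 0 →
      ‖⟪x, Dinv y⟫_ℂ‖ ^ 2 ≤ (⟪x, Dinv x⟫_ℂ).re * (⟪y, Dinv y⟫_ℂ).re := by
    intro x y hx hy
    have h0 := @InnerProductSpace.Core.inner_mul_inner_self_le ℂ H _ _ _ core x y
    have hx' : x - ⟪ψ, x⟫_ℂ • ψ = x := by rw [hx, zero_smul, sub_zero]
    have hy' : y - ⟪ψ, y⟫_ℂ • ψ = y := by rw [hy, zero_smul, sub_zero]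
    have e1 : @inner ℂ H core.toInner x y = ⟪x, Dinv y⟫_ℂ := by
      show ⟪x - ⟪ψ, x⟫_ℂ • ψ, Dinv (y - ⟪ψ, y⟫_ℂ • ψ)⟫_ℂ = _
      rw [hx', hy']
    have e2 : @inner ℂ H core.toInner y x = ⟪y, Dinv x⟫_ℂ := by
      show ⟪y - ⟪ψ, y⟫_ℂ • ψ, Dinv (x - ⟪ψ, x⟫_ℂ • ψ)⟫_ℂ = _
      rw [hx', hy']
    have e3 : @inner ℂ H core.toInner x x = ⟪x, Dinv x⟫_ℂ := by
      show ⟪x - ⟪ψ, x⟫_ℂ • ψ, Dinv (x - ⟪ψ, x⟫_ℂ • ψ)⟫_ℂ = _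
      rw [hx']
    have e4 : @inner ℂ H core.toInner y y = ⟪y, Dinv y⟫_ℂ := by
      show ⟪y - ⟪ψ, y⟫_ℂ • ψ, Dinv (y - ⟪ψ, y⟫_ℂ • ψ)⟫_ℂ = _
      rw [hy']
    rw [e1, e2, e3, e4] at h0
    have e5 : ⟪y, Dinv x⟫_ℂ = (starRingEnd ℂ) ⟪x, Dinv y⟫_ℂ := by
      rw [inner_conj_symm]
      exact (symDinv.apply_clm y x).symm
    rw [e5, RCLike.norm_conj, RCLike.re_to_complex, RCLike.re_to_complex] at h0
    calc ‖⟪x, Dinv y⟫_ℂ‖ ^ 2 = ‖⟪x, Dinv y⟫_ℂ‖ * ‖⟪x, Dinv y⟫_ℂ‖ := sq ‖⟪x, Dinv y⟫_ℂ‖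
    _ ≤ _ := h0
  -- eigenvector behaviour of continuous functional calculus
  have cfc_eig : ∀ g : ℝ → ℝ, Continuous g → cfc g D ψ = ((g lamD : ℝ) : ℂ) • ψ :=
    fun g hg => cfc_eigvec hD hψ0 hDψ' g hg
  set c : ℝ := βhi + lam with hcdef
  set blam : ℝ := βlo + lam with hblamdef
  have hblam0 : 0 < blam := by rw [hblamdef]; linarith
  have hc0 : 0 < c := by rw [hcdef]; linarith
  set g : ℝ → ℝ := fun t => f t + lam with hgdef
  have hgcont : Continuous g := by rw [hgdef]; fun_prop
  set A : H →L[ℂ] H := cfc g D with hAdef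
  have hAsa : IsSelfAdjoint A := cfc_predicate g D
  have symA : (A : H →ₗ[ℂ] H).IsSymmetric := hAsa.isSymmetric
  set μ : ℝ := f lamD + lam with hμdef
  have hμlo : blam ≤ μ := by rw [hμdef, hblamdef]; linarith [(hfb lamD).1]
  have hμhi : μ ≤ c := by rw [hμdef, hcdef]; linarith [(hfb lamD).2]
  have hμ0 : 0 < μ := lt_of_lt_of_le hblam0 hμlo
  have hAψ : A ψ = ((μ : ℝ) : ℂ) • ψ := cfc_eig g hgcont
  have hAperp : ∀ v, ⟪ψ, v⟫_ℂ = 0 → ⟪ψ, A v⟫_ℂ = 0 := hperp A symA μ hAψ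
  have hAx : ∀ x, A x = cfc f D x + (lam : ℂ) • x := by
    intro x
    have h1 : A = cfc f D + cfc (fun _ : ℝ => lam) D := by
      rw [hAdef, hgdef, cfc_add (a := D) f (fun _ => lam) hf.continuousOn continuousOn_const]
    have h2 : cfc (fun _ : ℝ => lam) D = algebraMap ℝ (H →L[ℂ] H) lam := cfc_const lam D
    rw [h1, h2, Algebra.algebraMap_eq_smul_one]
    simp [ContinuousLinearMap.add_apply, ContinuousLinearMap.smul_apply, Complex.coe_smul]
  -- commutation lemmas
  have hcomm : ∀ g₁ g₂ : ℝ → ℝ, Continuous g₁ → Continuous g₂ →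
      cfc g₁ D * cfc g₂ D = cfc g₂ D * cfc g₁ D := by
    intro g₁ g₂ h1 h2
    rw [← cfc_mul g₁ g₂ D h1.continuousOn h2.continuousOn,
      ← cfc_mul g₂ g₁ D h2.continuousOn h1.continuousOn]
    exact cfc_congr fun t _ => mul_comm _ _
  have commDinv : ∀ T : H →L[ℂ] H, T * D = D * T → ∀ x, Dinv (T x) = T (Dinv x) := by
    intro T hT
    have h1 : Dinv * (T * D) * Dinv = Dinv * (D * T) * Dinv := by rw [hT]
    rw [← mul_assoc Dinv T D, mul_assoc (Dinv * T) D Dinv, hD1', mul_one,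
      ← mul_assoc Dinv D T, hD2', one_mul] at h1
    intro x
    have := ContinuousLinearMap.ext_iff.mp h1 x
    simpa [ContinuousLinearMap.mul_apply] using this
  have hAD : A * D = D * A := by
    have h := hcomm g id hgcont continuous_id
    rwa [cfc_id ℝ D, ← hAdef] at h
  have hADinv : ∀ x, Dinv (A x) = A (Dinv x) := commDinv A hAD
  -- the auxiliary operator R
  set r : ℝ → ℝ := fun t => Real.sqrt (c ^ 2 - g t ^ 2) with hrdef
  have hrcont : Continuous r := by
    rw [hrdef]; exact (continuous_const.sub (hgcont.pow 2)).sqrt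
  set R : H →L[ℂ] H := cfc r D with hRdef
  have hRsa : IsSelfAdjoint R := cfc_predicate r D
  have symR : (R : H →ₗ[ℂ] H).IsSymmetric := hRsa.isSymmetric
  have hRψ : R ψ = ((r lamD : ℝ) : ℂ) • ψ := cfc_eig r hrcont
  have hRD : R * D = D * R := by
    have h := hcomm r id hrcont continuous_id
    rwa [cfc_id ℝ D, ← hRdef] at h
  have hRDinv : ∀ x, Dinv (R x) = R (Dinv x) := commDinv R hRD
  have hgb : ∀ t, blam ≤ g t ∧ g t ≤ c := by
    intro t
    constructor
    · rw [hgdef, hblamdef]; have := (hfb t).1; dsimp only; linarith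
    · rw [hgdef, hcdef]; have := (hfb t).2; dsimp only; linarith
  have hrr : (fun t => r t * r t) = fun t => c ^ 2 - g t ^ 2 := by
    funext t
    exact Real.mul_self_sqrt (by nlinarith [(hgb t).1, (hgb t).2, hblam0])
  have hRR : R * R = (c ^ 2 : ℝ) • (1 : H →L[ℂ] H) - A * A := by
    have h1 : R * R = cfc (fun t => c ^ 2 - g t ^ 2) D := by
      rw [hRdef, ← cfc_mul r r D hrcont.continuousOn hrcont.continuousOn, hrr]
    have h2 : cfc (fun t : ℝ => c ^ 2 - g t ^ 2) D
        = cfc (fun _ : ℝ => c ^ 2) D - cfc (fun t => g t ^ 2) D := by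
      exact cfc_sub (fun _ : ℝ => c ^ 2) (fun t => g t ^ 2) D continuousOn_const
        ((hgcont.pow 2).continuousOn)
    have h3 : cfc (fun _ : ℝ => c ^ 2) D = (c ^ 2 : ℝ) • (1 : H →L[ℂ] H) := by
      rw [cfc_const (c ^ 2) D, Algebra.algebraMap_eq_smul_one]
    have h4 : cfc (fun t : ℝ => g t ^ 2) D = A * A := by
      have : (fun t : ℝ => g t ^ 2) = fun t => g t * g t := by funext t; ring
      rw [this, cfc_mul g g D hgcont.continuousOn hgcont.continuousOn, ← hAdef]
    rw [h1, h2, h3, h4]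
  -- key quadratic form bound on the orthogonal complement
  have hkey : ∀ v, ⟪ψ, v⟫_ℂ = 0 →
      (⟪A v, Dinv (A v)⟫_ℂ).re ≤ c ^ 2 * (⟪v, Dinv v⟫_ℂ).re := by
    intro v hv
    have hRv : ⟪ψ, R v⟫_ℂ = 0 := hperp R symR _ hRψ v hv
    have h0 : 0 ≤ (⟪R v, Dinv (R v)⟫_ℂ).re := hpos _ hRv
    have hid : ⟪R v, Dinv (R v)⟫_ℂ
        = ((c ^ 2 : ℝ) : ℂ) * ⟪v, Dinv v⟫_ℂ - ⟪A v, Dinv (A v)⟫_ℂ := by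
      have e1 : ⟪R v, Dinv (R v)⟫_ℂ = ⟪v, R (Dinv (R v))⟫_ℂ := symR.apply_clm v (Dinv (R v))
      have e2 : R (Dinv (R v)) = Dinv (R (R v)) := (hRDinv (R v)).symm
      have e3 : R (R v) = (c ^ 2 : ℝ) • v - A (A v) := by
        have := ContinuousLinearMap.ext_iff.mp hRR v
        simpa [ContinuousLinearMap.mul_apply, ContinuousLinearMap.sub_apply,
          ContinuousLinearMap.smul_apply] using this
      have e4 : ⟪v, Dinv (A (A v))⟫_ℂ = ⟪A v, Dinv (A v)⟫_ℂ := by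
        rw [hADinv (A v), ← symA.apply_clm v (Dinv (A v))]
      have e5 : (c ^ 2 : ℝ) • v = ((c ^ 2 : ℝ) : ℂ) • v := (Complex.coe_smul _ _).symm
      rw [e1, e2, e3, e5, map_sub, map_smul, inner_sub_right, inner_smul_right, e4]
    have hre : (⟪R v, Dinv (R v)⟫_ℂ).re
        = c ^ 2 * (⟪v, Dinv v⟫_ℂ).re - (⟪A v, Dinv (A v)⟫_ℂ).re := by
      rw [hid, Complex.sub_re, Complex.mul_re]
      simp only [Complex.ofReal_re, Complex.ofReal_im]
      ring
    linarith
  -- decompositions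
  set α : ℂ := ⟪ψ, u⟫_ℂ with hαdef
  set up : H := u - α • ψ with hupdef
  set φp : H := φ - (γ : ℂ) • ψ with hφpdef
  have hupperp : ⟪ψ, up⟫_ℂ = 0 := by
    rw [hupdef, inner_sub_right, inner_smul_right, hψψ, mul_one, ← hαdef, sub_self]
  have hφperp : ⟪ψ, φp⟫_ℂ = 0 := by
    rw [hφpdef, inner_sub_right, inner_smul_right, hψψ, mul_one, hφψ, sub_self]
  have hupψ : ⟪up, ψ⟫_ℂ = 0 := by
    rw [← inner_conj_symm, hupperp, map_zero]
  set Q : ℝ := (⟪up, Dinv up⟫_ℂ).re with hQdef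
  set Pq : ℝ := (⟪φp, Dinv φp⟫_ℂ).re with hPdef
  have hQ0 : 0 ≤ Q := hpos up hupperp
  have hP0 : 0 ≤ Pq := hpos φp hφperp
  have hudecomp : u = α • ψ + up := by rw [hupdef]; abel
  have hφdecomp : φ = (γ : ℂ) • ψ + φp := by rw [hφpdef]; abel
  -- splitting of the quadratic form of Dinv at u
  have hsplit : (⟪u, Dinv u⟫_ℂ).re = ‖α‖ ^ 2 * lamD⁻¹ + Q := by
    have h1 : ⟪u, Dinv u⟫_ℂ
        = ((‖α‖ ^ 2 * lamD⁻¹ : ℝ) : ℂ) + ⟪up, Dinv up⟫_ℂ := by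
      conv_lhs => rw [hudecomp]
      have d1 : Dinv (α • ψ + up) = (α * ((lamD⁻¹ : ℝ) : ℂ)) • ψ + Dinv up := by
        rw [map_add, map_smul, hDinvψ, smul_smul]
      simp only [d1, inner_add_left, inner_add_right, inner_smul_left, inner_smul_right,
        hψψ, hDinvperp up hupperp, hupψ, mul_one, mul_zero, zero_add, add_zero]
      congr 1
      have h9 : α * ((lamD⁻¹ : ℝ) : ℂ) * (starRingEnd ℂ) α
          = α * (starRingEnd ℂ) α * ((lamD⁻¹ : ℝ) : ℂ) := by ring
      rw [h9, Complex.mul_conj, Complex.normSq_eq_norm_sq]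
      push_cast
      ring
    rw [h1, Complex.add_re, Complex.ofReal_re, hQdef]
  -- the constraint
  set w : H := Dinv (A φp) with hwdef
  have hAφperp : ⟪ψ, A φp⟫_ℂ = 0 := hAperp φp hφperp
  have hwperp : ⟪ψ, w⟫_ℂ = 0 := hDinvperp _ hAφperp
  have hwψ : ⟪w, ψ⟫_ℂ = 0 := by rw [← inner_conj_symm, hwperp, map_zero]
  set b : ℂ := ⟪A φp, Dinv up⟫_ℂ with hbdef
  set κ : ℝ := γ * μ / lamD with hκdef
  have hκ0 : κ ≠ 0 := by
    rw [hκdef]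
    exact div_ne_zero (mul_ne_zero (ne_of_gt hγ) (ne_of_gt hμ0)) hlamD0
  have hwu : ⟪w, up⟫_ℂ = b := by
    rw [hbdef, hwdef]
    exact symDinv.apply_clm (A φp) up
  have hAφ : Dinv (A φ) = (κ : ℂ) • ψ + w := by
    conv_lhs => rw [hφdecomp]
    have h9 : (γ : ℂ) * ((μ : ℝ) : ℂ) * ((lamD⁻¹ : ℝ) : ℂ) = ((κ : ℝ) : ℂ) := by
      rw [hκdef]
      push_cast
      ring
    rw [map_add, map_smul, hAψ, smul_smul, map_add, map_smul, hDinvψ, smul_smul, h9, ← hwdef]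
  have hcon2 : (κ : ℂ) * α + b = 0 := by
    have h := hconstraint
    rw [← hAx φ, hAφ, inner_add_left, inner_smul_left, Complex.conj_ofReal] at h
    have h2 : ⟪w, u⟫_ℂ = b := by
      conv_lhs => rw [hudecomp]
      rw [inner_add_right, inner_smul_right, hwψ, mul_zero, zero_add, hwu]
    rw [h2, ← hαdef] at h
    exact h
  have hα2 : κ ^ 2 * ‖α‖ ^ 2 = ‖b‖ ^ 2 := by
    have h3 : (κ : ℂ) * α = -b := eq_neg_of_add_eq_zero_left hcon2
    have h4 : ‖(κ : ℂ) * α‖ = ‖b‖ := by rw [h3, norm_neg]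
    rw [norm_mul] at h4
    have h5 : ‖((κ : ℝ) : ℂ)‖ = |κ| := by rw [Complex.norm_real, Real.norm_eq_abs]
    rw [h5] at h4
    have h6 := congrArg (fun t : ℝ => t ^ 2) h4
    simpa [mul_pow, sq_abs] using h6
  have hb2 : ‖b‖ ^ 2 ≤ (⟪A φp, Dinv (A φp)⟫_ℂ).re * Q := by
    have h7 := hCS (A φp) up hAφperp hupperp
    rw [← hbdef, ← hQdef] at h7
    exact h7
  have hX : (⟪A φp, Dinv (A φp)⟫_ℂ).re ≤ c ^ 2 * Pq := by
    have h8 := hkey φp hφperp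
    rw [← hPdef] at h8
    exact h8
  have hmain : κ ^ 2 * ‖α‖ ^ 2 ≤ c ^ 2 * Pq * Q := by
    rw [hα2]
    calc ‖b‖ ^ 2 ≤ (⟪A φp, Dinv (A φp)⟫_ℂ).re * Q := hb2
    _ ≤ c ^ 2 * Pq * Q := mul_le_mul_of_nonneg_right hX hQ0
  have hl2 : (0:ℝ) < lamD ^ 2 := by positivity
  have hκsq : κ ^ 2 = γ ^ 2 * μ ^ 2 / lamD ^ 2 := by
    rw [hκdef]
    field_simp
  have hkey2 : ‖α‖ ^ 2 * (γ ^ 2 * μ ^ 2) ≤ lamD ^ 2 * (c ^ 2 * Pq * Q) := by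
    rw [hκsq] at hmain
    calc ‖α‖ ^ 2 * (γ ^ 2 * μ ^ 2) = γ ^ 2 * μ ^ 2 / lamD ^ 2 * ‖α‖ ^ 2 * lamD ^ 2 := by
          field_simp
    _ ≤ c ^ 2 * Pq * Q * lamD ^ 2 := mul_le_mul_of_nonneg_right hmain (le_of_lt hl2)
    _ = lamD ^ 2 * (c ^ 2 * Pq * Q) := by ring
  have hkey3 : ‖α‖ ^ 2 * (γ ^ 2 * blam ^ 2) ≤ lamD ^ 2 * (c ^ 2 * Pq * Q) := by
    refine le_trans ?_ hkey2
    have h9 : blam ^ 2 ≤ μ ^ 2 := by nlinarith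
    have h10 : (0:ℝ) ≤ ‖α‖ ^ 2 * γ ^ 2 := mul_nonneg (sq_nonneg _) (sq_nonneg _)
    nlinarith [mul_nonneg h10 (sub_nonneg.mpr h9)]
  have habs : |lamD| = -lamD := abs_of_neg hlamD
  have hbgpos : (0:ℝ) < blam * γ := mul_pos hblam0 hγ
  constructor
  · rw [hsplit, hC₀, habs]
    have hs2 : ‖α‖ ^ 2 ≤ (c / (blam * γ)) ^ 2 * Pq * Q * lamD ^ 2 := by
      rw [div_pow, div_mul_eq_mul_div, div_mul_eq_mul_div, div_mul_eq_mul_div,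
        le_div_iff₀ (by positivity)]
      calc ‖α‖ ^ 2 * (blam * γ) ^ 2 = ‖α‖ ^ 2 * (γ ^ 2 * blam ^ 2) := by ring
      _ ≤ lamD ^ 2 * (c ^ 2 * Pq * Q) := hkey3
      _ = c ^ 2 * Pq * Q * lamD ^ 2 := by ring
    have hfin : lamD * ((c / (blam * γ)) ^ 2 * Pq) * Q ≤ ‖α‖ ^ 2 * lamD⁻¹ := by
      rw [← div_eq_mul_inv, le_div_iff_of_neg hlamD]
      calc ‖α‖ ^ 2 ≤ (c / (blam * γ)) ^ 2 * Pq * Q * lamD ^ 2 := hs2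
      _ = lamD * ((c / (blam * γ)) ^ 2 * Pq) * Q * lamD := by ring
    linarith
  · exact mul_nonneg (by linarith) hQ0
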